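/- Let ρ ∈ (−1,1) and μ1, μ2, σ1, σ2, δ > 0. Set A₀ := [(μ1σ2 − μ2σ1)² + 2(1−ρ)μ1μ2σ1σ2]/(2σ1²σ2²(1−ρ²)) and γ1 := 2δσ1²σ2²(1−ρ²)/[(μ1σ2 − μ2σ1)² + 2(1−ρ)μ1μ2σ1σ2 + 2δσ1²σ2²(1−ρ²)]. Then γ1 ∈ (0,1), and for every K > 0 the function g(x) := K·x^{γ1} satisfies −A₀·g'(x)²/g''(x) − δ·g(x) = 0 for all x > 0. -/

import Mathlib

theorem power_solution_no_uncertainty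
    (ρ μ1 μ2 σ1 σ2 δ : ℝ)
    (hρ : ρ ∈ Set.Ioo (-1 : ℝ) 1)
    (hμ1 : 0 < μ1) (hμ2 : 0 < μ2) (hσ1 : 0 < σ1) (hσ2 : 0 < σ2) (hδ : 0 < δ)
    (A0 γ1 : ℝ)
    (hA0 : A0 = ((μ1*σ2 - μ2*σ1)^2 + 2*(1-ρ)*μ1*μ2*σ1*σ2) / (2*σ1^2*σ2^2*(1-ρ^2)))
    (hγ1 : γ1 = 2*δ*σ1^2*σ2^2*(1-ρ^2)
        / ((μ1*σ2 - μ2*σ1)^2 + 2*(1-ρ)*μ1*μ2*σ1*σ2 + 2*δ*σ1^2*σ2^2*(1-ρ^2))) :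
    γ1 ∈ Set.Ioo (0 : ℝ) 1 ∧
      ∀ K : ℝ, 0 < K → ∀ x : ℝ, 0 < x →
        -A0 * (deriv (fun y : ℝ => K * y ^ γ1) x)^2
            / (deriv (deriv (fun y : ℝ => K * y ^ γ1)) x)
          - δ * (K * x ^ γ1) = 0 := by
  obtain ⟨hρ1, hρ2⟩ := hρ
  have h1ρ : 0 < 1 - ρ := by linarith
  have h1ρ2 : 0 < 1 - ρ^2 := by nlinarith
  set N : ℝ := (μ1*σ2 - μ2*σ1)^2 + 2*(1-ρ)*μ1*μ2*σ1*σ2 with hNdef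
  set D : ℝ := 2*σ1^2*σ2^2*(1-ρ^2) with hDdef
  have hNpos : 0 < N := by
    have : 0 < 2*(1-ρ)*μ1*μ2*σ1*σ2 :=
      mul_pos (mul_pos (mul_pos (mul_pos (mul_pos two_pos h1ρ) hμ1) hμ2) hσ1) hσ2
    have := sq_nonneg (μ1*σ2 - μ2*σ1)
    rw [hNdef]; linarith
  have hDpos : 0 < D := by
    rw [hDdef]; positivity
  have hγ : γ1 = δ*D/(N + δ*D) := by rw [hγ1, hNdef, hDdef]; ring_nf
  have hA : A0 = N/D := by rw [hA0, hNdef, hDdef]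
  have hden : 0 < N + δ*D := by positivity
  have hγpos : 0 < γ1 := by rw [hγ]; positivity
  have hγlt : γ1 < 1 := by
    rw [hγ, div_lt_one hden]; linarith
  have key : A0 * γ1 = δ * (1 - γ1) := by
    rw [hA, hγ]; field_simp; ring
  refine ⟨⟨hγpos, hγlt⟩, ?_⟩
  intro K hK x hx
  have hd1 : ∀ y ∈ Set.Ioi (0:ℝ),
      deriv (fun z : ℝ => K * z ^ γ1) y = K * γ1 * y ^ (γ1 - 1) := by
    intro y hy
    rw [deriv_const_mul _ ((Real.hasDerivAt_rpow_const
      (Or.inl (ne_of_gt hy))).differentiableAt),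
      Real.deriv_rpow_const (x := y)]
    ring
  have h1 : deriv (fun z : ℝ => K * z ^ γ1) x = K * γ1 * x ^ (γ1 - 1) := hd1 x hx
  have hev : deriv (fun z : ℝ => K * z ^ γ1)
      =ᶠ[nhds x] (fun y : ℝ => K * γ1 * y ^ (γ1 - 1)) := by
    filter_upwards [Ioi_mem_nhds hx] with y hy using hd1 y hy
  have h2 : deriv (deriv (fun z : ℝ => K * z ^ γ1)) x
      = K * γ1 * (γ1 - 1) * x ^ (γ1 - 2) := by
    rw [hev.deriv_eq,
      deriv_const_mul _ ((Real.hasDerivAt_rpow_const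
        (Or.inl (ne_of_gt hx))).differentiableAt),
      Real.deriv_rpow_const (x := x),
      show γ1 - 1 - 1 = γ1 - 2 from by ring]
    ring
  rw [h1, h2]
  have ha : x ^ (γ1 - 1) = x ^ γ1 / x := by
    rw [Real.rpow_sub hx, Real.rpow_one]
  have hb : x ^ (γ1 - 2) = x ^ γ1 / x ^ 2 := by
    rw [show γ1 - 2 = γ1 - 1 - 1 from by ring, Real.rpow_sub hx,
      Real.rpow_sub hx, Real.rpow_one]
    ring
  rw [ha, hb]
  have ht : 0 < x ^ γ1 := Real.rpow_pos_of_pos hx _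
  have hγ1ne : γ1 - 1 ≠ 0 := by linarith
  have hxne : x ≠ 0 := ne_of_gt hx
  have htne : x ^ γ1 ≠ 0 := ne_of_gt ht
  have hKne : K ≠ 0 := ne_of_gt hK
  have hγne : γ1 ≠ 0 := ne_of_gt hγpos
  field_simp
  linear_combination (-K * x^γ1) * key
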